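/- arXiv:1311.2305 — 2 statements merged into one kernel-verified Lean document; each statement's English description precedes it below -/
import Mathlib

section
/- Let F : R^M → R be C⁴ and let Tay₂F denote its second-order Taylor polynomial at 0. Define for φ ∈ R^M and a norm ‖·‖_Φ on R^M the quantity ‖H‖_{T_φ(Φ)} := Σ_{n=0}^{4} (1/n!) sup_{‖f_i‖_Φ ≤ 1} |D^n H(φ)[f_1,…,f_n]|. Then ‖F − Tay₂F‖_{T_φ(Φ)} ≤ (1 + ‖φ‖_Φ)³ · sup_{t∈[0,1], k∈{3,4}} ‖D^k F(tφ)‖_{T^k_{tφ}(Φ)}, where ‖D^k F(ψ)‖_{T^k_ψ(Φ)} := sup_{‖f_i‖_Φ≤1} |D^k F(ψ)[f_1,…,f_k]|. -/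
open Finset

set_option maxHeartbeats 8000000

private lemma norm_fderiv_eq_norm_iteratedFDeriv_one {E : Type*} [NormedAddCommGroup E]
    [NormedSpace ℝ E] (g : E → ℝ) (y : E) :
    ‖fderiv ℝ g y‖ = ‖iteratedFDeriv ℝ 1 g y‖ := by
  rw [← norm_iteratedFDeriv_zero (𝕜 := ℝ) (f := fderiv ℝ g) (x := y),
    norm_iteratedFDeriv_fderiv]

/-- Taylor remainder bound for the `T_φ(Φ)` norm: if `F` is `C⁴` on a
finite-dimensional normed space, `G := F − Tay₂F` (second-order Taylor polynomial at `0`),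
then `Σ_{n≤4} ‖DⁿG(φ)‖/n! ≤ (1+‖φ‖)³ · sup_{t∈[0,1],k∈{3,4}} ‖D^kF(tφ)‖`. -/
theorem stmt8 {E : Type*} [NormedAddCommGroup E] [NormedSpace ℝ E] [FiniteDimensional ℝ E]
    (F : E → ℝ) (hF : ContDiff ℝ 4 F) (φ : E) :
    (∑ n ∈ Finset.range 5, (1 / (n.factorial : ℝ)) *
        ‖iteratedFDeriv ℝ n
          (fun ψ => F ψ - (F 0 + fderiv ℝ F 0 ψ +
            (1 / 2) * iteratedFDeriv ℝ 2 F 0 ![ψ, ψ])) φ‖)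
      ≤ (1 + ‖φ‖) ^ 3 *
        ⨆ t : Set.Icc (0 : ℝ) 1,
          max ‖iteratedFDeriv ℝ 3 F ((t : ℝ) • φ)‖ ‖iteratedFDeriv ℝ 4 F ((t : ℝ) • φ)‖ := by
  classical
  set L : E →L[ℝ] ℝ := fderiv ℝ F 0 with hLdef
  set A : E →L[ℝ] E →L[ℝ] ℝ := fderiv ℝ (fderiv ℝ F) 0 with hAdef
  have hsym : ∀ u v : E, A u v = A v u := fun u v =>
    (hF.contDiffAt.isSymmSndFDerivAt (by norm_num)).eq u v
  have hdiag : ∀ u v : E, iteratedFDeriv ℝ 2 F 0 ![u, v] = A u v := by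
    intro u v
    rw [iteratedFDeriv_two_apply]
    simp [hAdef]
  set Q : E → ℝ := fun ψ => (1 / 2 : ℝ) * A ψ ψ with hQdef
  set P : E → ℝ := fun ψ => F 0 + L ψ + Q ψ with hPdef
  set G : E → ℝ := fun ψ => F ψ - P ψ with hGdef
  have hGeq : (fun ψ => F ψ - (F 0 + fderiv ℝ F 0 ψ +
      (1 / 2) * iteratedFDeriv ℝ 2 F 0 ![ψ, ψ])) = G := by
    funext ψ
    simp only [hGdef, hPdef, hQdef, hdiag ψ ψ, hLdef]
  rw [hGeq]
  -- derivatives of Q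
  have hQd : ∀ x : E, HasFDerivAt Q (A x) x := by
    intro x
    have h1 : HasFDerivAt (fun ψ : E => A ψ ψ)
        ((A x).comp (ContinuousLinearMap.id ℝ E) + ContinuousLinearMap.flip A x) x :=
      A.hasFDerivAt.clm_apply (hasFDerivAt_id x)
    have h2 : HasFDerivAt Q ((1 / 2 : ℝ) • ((A x).comp (ContinuousLinearMap.id ℝ E) +
        ContinuousLinearMap.flip A x)) x := h1.const_mul (1 / 2 : ℝ)
    convert h2 using 1
    ext v
    have := hsym v x
    simp only [ContinuousLinearMap.smul_apply, ContinuousLinearMap.add_apply,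
      ContinuousLinearMap.coe_comp', Function.comp_apply, ContinuousLinearMap.coe_id', id_eq,
      ContinuousLinearMap.flip_apply, smul_eq_mul]
    rw [this]
    ring
  have hQc : ContDiff ℝ 4 Q := contDiff_const.mul (A.contDiff.clm_apply contDiff_id)
  have hPc : ContDiff ℝ 4 P := (contDiff_const.add L.contDiff).add hQc
  have hGc : ContDiff ℝ 4 G := hF.sub hPc
  -- first derivative of P
  have hPd : ∀ x : E, HasFDerivAt P (L + A x) x := by
    intro x
    have h := ((hasFDerivAt_const (F 0) x).add (L.hasFDerivAt (x := x))).add (hQd x)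
    rw [show (0 : E →L[ℝ] ℝ) + L + A x = L + A x by rw [zero_add]] at h
    exact h
  have hfP : fderiv ℝ P = fun x => L + A x := funext fun x => (hPd x).fderiv
  have hPdd : ∀ x : E, fderiv ℝ (fderiv ℝ P) x = A := by
    intro x
    rw [hfP]
    have h : HasFDerivAt (fun y : E => L + A y) ((0 : E →L[ℝ] E →L[ℝ] ℝ) + A) x :=
      (hasFDerivAt_const L x).add A.hasFDerivAt
    exact h.fderiv.trans (zero_add A)
  have hPdd' : fderiv ℝ (fderiv ℝ P) = fun _ => A := funext hPdd
  -- subtraction formula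
  have hsub : ∀ n : ℕ, (n : WithTop ℕ∞) ≤ 4 → ∀ x : E,
      iteratedFDeriv ℝ n G x = iteratedFDeriv ℝ n F x - iteratedFDeriv ℝ n P x := by
    intro n hn x
    have h1 : (fun ψ => G ψ + P ψ) = F := by funext ψ; simp [hGdef]
    have h2 := iteratedFDeriv_add_apply' (x := x) (hGc.of_le hn).contDiffAt (hPc.of_le hn).contDiffAt
    rw [h1] at h2
    exact eq_sub_of_add_eq h2.symm
  -- low-order derivatives of G vanish at 0
  have hP0 : P 0 = F 0 := by simp [hPdef, hQdef]
  have hG0 : G 0 = 0 := by simp [hGdef, hP0]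
  have hfG0 : fderiv ℝ G 0 = 0 := by
    rw [hGdef, fderiv_fun_sub (hF.differentiable (by norm_num)).differentiableAt
      (hPc.differentiable (by norm_num)).differentiableAt, hfP]
    simp [hLdef]
  have hG1 : iteratedFDeriv ℝ 1 G 0 = 0 := by
    ext m
    rw [iteratedFDeriv_one_apply, hfG0]
    simp
  have hP2 : ∀ x : E, iteratedFDeriv ℝ 2 P x = iteratedFDeriv ℝ 2 F 0 := by
    intro x
    ext m
    rw [iteratedFDeriv_two_apply, hPdd x, ← hdiag (m 0) (m 1)]
    congr 1
    funext i
    fin_cases i <;> rfl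
  have hG2 : iteratedFDeriv ℝ 2 G 0 = 0 := by
    rw [hsub 2 (by norm_num) 0, hP2 0, sub_self]
  -- high-order derivatives of P vanish
  have hPhigh : ∀ (j : ℕ) (x : E), iteratedFDeriv ℝ (j + 3) P x = 0 := by
    intro j x
    rw [← norm_eq_zero]
    have e1 : ‖iteratedFDeriv ℝ (j + 2 + 1) P x‖
        = ‖iteratedFDeriv ℝ (j + 2) (fderiv ℝ P) x‖ := (norm_iteratedFDeriv_fderiv).symm
    have e2 : ‖iteratedFDeriv ℝ (j + 1 + 1) (fderiv ℝ P) x‖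
        = ‖iteratedFDeriv ℝ (j + 1) (fderiv ℝ (fderiv ℝ P)) x‖ :=
      (norm_iteratedFDeriv_fderiv).symm
    rw [show j + 3 = j + 2 + 1 from rfl, e1, show j + 2 = j + 1 + 1 from rfl, e2, hPdd',
      iteratedFDeriv_const_of_ne (Nat.succ_ne_zero _)]
    simp
  have hG3 : ∀ x : E, iteratedFDeriv ℝ 3 G x = iteratedFDeriv ℝ 3 F x := by
    intro x
    have h := hPhigh 0 x
    norm_num at h
    rw [hsub 3 (by norm_num) x, h, sub_zero]
  have hG4 : iteratedFDeriv ℝ 4 G φ = iteratedFDeriv ℝ 4 F φ := by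
    have h := hPhigh 1 φ
    norm_num at h
    rw [hsub 4 (by norm_num) φ, h, sub_zero]
  -- the supremum
  set M := ⨆ t : Set.Icc (0 : ℝ) 1,
      max ‖iteratedFDeriv ℝ 3 F ((t : ℝ) • φ)‖ ‖iteratedFDeriv ℝ 4 F ((t : ℝ) • φ)‖ with hMdef
  have hcont : Continuous fun t : Set.Icc (0 : ℝ) 1 =>
      max ‖iteratedFDeriv ℝ 3 F ((t : ℝ) • φ)‖ ‖iteratedFDeriv ℝ 4 F ((t : ℝ) • φ)‖ := by
    apply Continuous.max
    · exact ((hF.continuous_iteratedFDeriv (by norm_num)).comp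
        (continuous_subtype_val.smul continuous_const)).norm
    · exact ((hF.continuous_iteratedFDeriv (by norm_num)).comp
        (continuous_subtype_val.smul continuous_const)).norm
  have hbdd : BddAbove (Set.range fun t : Set.Icc (0 : ℝ) 1 =>
      max ‖iteratedFDeriv ℝ 3 F ((t : ℝ) • φ)‖ ‖iteratedFDeriv ℝ 4 F ((t : ℝ) • φ)‖) :=
    (isCompact_range hcont).bddAbove
  -- the segment
  have hconv : Convex ℝ (segment ℝ 0 φ) := convex_segment 0 φ
  have h0s : (0 : E) ∈ segment ℝ 0 φ := left_mem_segment ℝ 0 φ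
  have hφs : φ ∈ segment ℝ 0 φ := right_mem_segment ℝ 0 φ
  have hmem : ∀ x ∈ segment ℝ 0 φ, ∃ t : ℝ, t ∈ Set.Icc (0 : ℝ) 1 ∧ x = t • φ := by
    intro x hx
    rw [segment_eq_image ℝ 0 φ] at hx
    obtain ⟨t, ht, rfl⟩ := hx
    exact ⟨t, ht, by simp⟩
  have hnormle : ∀ x ∈ segment ℝ 0 φ, ‖x‖ ≤ ‖φ‖ := by
    intro x hx
    obtain ⟨t, ht, rfl⟩ := hmem x hx
    rw [norm_smul]
    have h1 : ‖t‖ ≤ 1 := by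
      rw [Real.norm_eq_abs]
      exact abs_le.mpr ⟨by linarith [ht.1], ht.2⟩
    calc ‖t‖ * ‖φ‖ ≤ 1 * ‖φ‖ := by
          exact mul_le_mul_of_nonneg_right h1 (norm_nonneg φ)
      _ = ‖φ‖ := one_mul _
  have hM3 : ∀ x ∈ segment ℝ 0 φ, ‖iteratedFDeriv ℝ 3 F x‖ ≤ M := by
    intro x hx
    obtain ⟨t, ht, rfl⟩ := hmem x hx
    exact le_trans (le_max_left _ _) (le_ciSup hbdd ⟨t, ht⟩)
  have hM4 : ‖iteratedFDeriv ℝ 4 F φ‖ ≤ M := by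
    have h := le_ciSup hbdd (⟨1, by norm_num⟩ : Set.Icc (0 : ℝ) 1)
    refine le_trans ?_ h
    simpa using le_max_right ‖iteratedFDeriv ℝ 3 F ((1 : ℝ) • φ)‖
      ‖iteratedFDeriv ℝ 4 F ((1 : ℝ) • φ)‖
  have hM0 : (0 : ℝ) ≤ M := by
    refine le_trans (le_trans (norm_nonneg (iteratedFDeriv ℝ 3 F ((0 : ℝ) • φ)))
      (le_max_left _ _)) (le_ciSup hbdd ⟨0, by norm_num⟩)
  -- bounds on derivatives of G
  have hG3b : ∀ x ∈ segment ℝ 0 φ, ‖iteratedFDeriv ℝ 3 G x‖ ≤ M := by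
    intro x hx
    rw [hG3 x]
    exact hM3 x hx
  have hG4b : ‖iteratedFDeriv ℝ 4 G φ‖ ≤ M := by rw [hG4]; exact hM4
  have hG2b : ∀ x ∈ segment ℝ 0 φ, ‖iteratedFDeriv ℝ 2 G x‖ ≤ M * ‖φ‖ := by
    intro x hx
    have h := Convex.norm_image_sub_le_of_norm_fderiv_le (f := iteratedFDeriv ℝ 2 G)
      (fun y _ => (hGc.differentiable_iteratedFDeriv (by norm_num)).differentiableAt)
      (fun y hy => by rw [norm_fderiv_iteratedFDeriv]; exact hG3b y hy)
      hconv h0s hx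
    rw [hG2, sub_zero, sub_zero] at h
    exact h.trans (mul_le_mul_of_nonneg_left (hnormle x hx) hM0)
  have hG1b : ∀ x ∈ segment ℝ 0 φ, ‖iteratedFDeriv ℝ 1 G x‖ ≤ M * ‖φ‖ * ‖φ‖ := by
    intro x hx
    have h := Convex.norm_image_sub_le_of_norm_fderiv_le (f := iteratedFDeriv ℝ 1 G)
      (fun y _ => (hGc.differentiable_iteratedFDeriv (by norm_num)).differentiableAt)
      (fun y hy => by rw [norm_fderiv_iteratedFDeriv]; exact hG2b y hy)
      hconv h0s hx
    rw [hG1, sub_zero, sub_zero] at h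
    exact h.trans (mul_le_mul_of_nonneg_left (hnormle x hx)
      (mul_nonneg hM0 (norm_nonneg φ)))
  have hG0b : ‖G φ‖ ≤ M * ‖φ‖ * ‖φ‖ * ‖φ‖ := by
    have h := Convex.norm_image_sub_le_of_norm_fderiv_le (f := G)
      (fun y _ => (hGc.differentiable (by norm_num)).differentiableAt)
      (fun y hy => by
        rw [norm_fderiv_eq_norm_iteratedFDeriv_one]
        exact hG1b y hy)
      hconv h0s hφs
    rw [hG0, sub_zero, sub_zero] at h
    exact h
  -- final arithmetic
  rw [Finset.sum_range_succ, Finset.sum_range_succ, Finset.sum_range_succ,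
    Finset.sum_range_succ, Finset.sum_range_one, norm_iteratedFDeriv_zero]
  have h1 := hG1b φ hφs
  have h2 := hG2b φ hφs
  have h3 := hG3b φ hφs
  have hr : (0 : ℝ) ≤ ‖φ‖ := norm_nonneg φ
  simp only [Nat.factorial]
  norm_num
  rw [Real.norm_eq_abs] at hG0b
  rw [← norm_fderiv_eq_norm_iteratedFDeriv_one] at h1
  nlinarith [hG0b, h1, h2, h3, hG4b, hM0, hr, mul_nonneg hM0 hr,
    mul_nonneg (mul_nonneg hM0 hr) hr, sq_nonneg ‖φ‖, mul_nonneg (mul_nonneg hM0 hr) (mul_nonneg hr hr)]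
end

section
/- Let φ be the Gaussian free field on a finite set Λ with covariance C = (−Δ+m²)^{−1}, m > 0. For X ⊂ Y ⊂ Λ and κ > 0 small enough that the relevant Gaussian integrals converge, define N(X,Y) := E[exp((κ/2)Σ_{x∈X,e}(∂_e φ(x))²) | φ = 0 on Y^c] and G(X,Y) := E[exp((κ/2)Σ_{x∈X,e}(∂_e φ(x))²) | φ on Y^c] / N(X,Y). Then: (i) G(X,Y) = 1 when the conditioning field vanishes (φ|_{∂Y} = 0 gives G = 1); (ii) if X₁ ⊂ Y₁, X₂ ⊂ Y₂, and Y₁ ∪ ∂Y₁ is disjoint from Y₂ ∪ ∂Y₂, then G(X₁,Y₁)·G(X₂,Y₂) = G(X₁∪X₂, Y₁∪Y₂); (iii) for fixed Y, X ↦ G(X,Y) is monotonically increasing (pointwise in the conditioning field) in X ⊂ Y. -/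
open Finset MeasureTheory

abbrev Pt (d : ℕ) := Fin d → ℤ

def unitVec {d : ℕ} (i : Fin d) : Pt d := fun j => if j = i then 1 else 0

def dirs (d : ℕ) : Finset (Pt d) :=
  (Finset.univ : Finset (Fin d)).biUnion fun i => {unitVec i, -unitVec i}

abbrev Fld (d : ℕ) := Pt d → ℝ

/-- Replace the values of `φ` on `Y` by `ψ`. -/
def paste {d : ℕ} (Y : Finset (Pt d)) (φ : Fld d) (ψ : ↥Y → ℝ) : Fld d :=
  fun x => if h : x ∈ Y then ψ ⟨x, h⟩ else φ x

/-- `Σ_e (∂_e χ(x))²`, summed over all `2d` directions (twice each edge at `x`). -/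
def gradSq {d : ℕ} (χ : Fld d) (x : Pt d) : ℝ :=
  ∑ v ∈ dirs d, (χ (x + v) - χ x) ^ 2

/-- The Gaussian energy `½ Σ_Λ (∂φ)² + (m²/2) Σ_Λ φ²` (with the convention
`Σ(∂φ)² = ½ Σ_x Σ_e (∂_e φ(x))²`). -/
noncomputable def energy {d : ℕ} (Λf : Finset (Pt d)) (m : ℝ) (χ : Fld d) : ℝ :=
  (1 / 4) * ∑ x ∈ Λf, gradSq χ x + m ^ 2 / 2 * ∑ x ∈ Λf, (χ x) ^ 2

/-- The Gaussian conditional expectation `E[F | φ on Y^c]`: integrate the variables on `Y`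
against the Gaussian weight with the field fixed outside `Y`. -/
noncomputable def condExp {d : ℕ} (Λf Y : Finset (Pt d)) (m : ℝ)
    (F : Fld d → ℝ) (φ : Fld d) : ℝ :=
  (∫ ψ : ↥Y → ℝ, F (paste Y φ ψ) * Real.exp (-energy Λf m (paste Y φ ψ))) /
    (∫ ψ : ↥Y → ℝ, Real.exp (-energy Λf m (paste Y φ ψ)))

/-- The regulator `G(X,Y) = E[exp((κ/2)Σ_X(∂φ)²) | Y^c] / N(X,Y)`, where `N(X,Y)` is the
same conditional expectation with zero boundary field. -/
noncomputable def reg {d : ℕ} (Λf : Finset (Pt d)) (m κ : ℝ)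
    (X Y : Finset (Pt d)) (φ : Fld d) : ℝ :=
  condExp Λf Y m (fun χ => Real.exp (κ / 4 * ∑ x ∈ X, gradSq χ x)) φ /
    condExp Λf Y m (fun χ => Real.exp (κ / 4 * ∑ x ∈ X, gradSq χ x)) 0

/-- `Y` together with its outer boundary `Y ∪ ∂Y`. -/
def closStar {d : ℕ} (Y : Finset (Pt d)) : Set (Pt d) :=
  {x | x ∈ Y ∨ ∃ v ∈ dirs d, x + v ∈ Y}

namespace Stmt14Aux

variable {d : ℕ}

lemma neg_mem_dirs {v : Pt d} (hv : v ∈ dirs d) : -v ∈ dirs d := by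
  simp only [dirs, Finset.mem_biUnion, Finset.mem_insert, Finset.mem_singleton] at hv ⊢
  obtain ⟨i, hi, h⟩ := hv
  exact ⟨i, hi, by rcases h with h | h <;> simp [h]⟩

lemma mem_closStar_of_mem {Y : Finset (Pt d)} {x : Pt d} (h : x ∈ Y) : x ∈ closStar Y :=
  Or.inl h

lemma add_mem_closStar {Y : Finset (Pt d)} {x v : Pt d} (h : x ∈ Y) (hv : v ∈ dirs d) :
    x + v ∈ closStar Y :=
  Or.inr ⟨-v, neg_mem_dirs hv, by simpa [add_assoc] using h⟩

lemma mem_closStar_of_add_mem {Y : Finset (Pt d)} {x v : Pt d} (h : x + v ∈ Y)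
    (hv : v ∈ dirs d) : x ∈ closStar Y :=
  Or.inr ⟨v, hv, h⟩

lemma paste_mem {Y : Finset (Pt d)} (φ : Fld d) (ψ : ↥Y → ℝ) {x : Pt d} (h : x ∈ Y) :
    paste Y φ ψ x = ψ ⟨x, h⟩ := dif_pos h

lemma paste_not_mem {Y : Finset (Pt d)} (φ : Fld d) (ψ : ↥Y → ℝ) {x : Pt d} (h : x ∉ Y) :
    paste Y φ ψ x = φ x := dif_neg h

/-- extension of `ψ` by zero -/
def tl (Y : Finset (Pt d)) (ψ : ↥Y → ℝ) : Fld d := paste Y 0 ψ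

lemma tl_add (Y : Finset (Pt d)) (ψ ψ' : ↥Y → ℝ) : tl Y (ψ + ψ') = tl Y ψ + tl Y ψ' := by
  funext x; by_cases h : x ∈ Y <;> simp [tl, paste, h]

lemma tl_sub (Y : Finset (Pt d)) (ψ ψ' : ↥Y → ℝ) : tl Y (ψ - ψ') = tl Y ψ - tl Y ψ' := by
  funext x; by_cases h : x ∈ Y <;> simp [tl, paste, h]

lemma tl_smul (Y : Finset (Pt d)) (t : ℝ) (ψ : ↥Y → ℝ) : tl Y (t • ψ) = t • tl Y ψ := by
  funext x; by_cases h : x ∈ Y <;> simp [tl, paste, h]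

lemma tl_zero (Y : Finset (Pt d)) : tl Y 0 = 0 := by
  funext x; by_cases h : x ∈ Y <;> simp [tl, paste, h]

lemma paste_decomp (Y : Finset (Pt d)) (φ : Fld d) (ψ : ↥Y → ℝ) :
    paste Y φ ψ = tl Y ψ + paste Y φ 0 := by
  funext x; by_cases h : x ∈ Y <;> simp [tl, paste, h]

/-- quadratic exponent -/
noncomputable def qf (Λf X : Finset (Pt d)) (m κ : ℝ) (χ : Fld d) : ℝ :=
  κ / 4 * ∑ x ∈ X, gradSq χ x - energy Λf m χ

/-- the bilinear companion of the gradient square -/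
def bgr (a b : Fld d) (x : Pt d) : ℝ :=
  ∑ v ∈ dirs d, (a (x + v) - a x) * (b (x + v) - b x)

/-- the bilinear companion of `qf` -/
noncomputable def bf (Λf X : Finset (Pt d)) (m κ : ℝ) (a b : Fld d) : ℝ :=
  κ / 2 * ∑ x ∈ X, bgr a b x -
    ((1 / 2) * ∑ x ∈ Λf, bgr a b x + m ^ 2 * ∑ x ∈ Λf, a x * b x)

lemma gradSq_nonneg (χ : Fld d) (x : Pt d) : 0 ≤ gradSq χ x :=
  Finset.sum_nonneg fun v _ => sq_nonneg _

lemma gradSq_add (a b : Fld d) (x : Pt d) :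
    gradSq (a + b) x = gradSq a x + gradSq b x + 2 * bgr a b x := by
  unfold gradSq bgr
  rw [Finset.mul_sum, ← Finset.sum_add_distrib, ← Finset.sum_add_distrib]
  exact Finset.sum_congr rfl fun v _ => by simp only [Pi.add_apply]; ring

lemma gradSq_smul (t : ℝ) (a : Fld d) (x : Pt d) :
    gradSq (t • a) x = t ^ 2 * gradSq a x := by
  unfold gradSq
  rw [Finset.mul_sum]
  exact Finset.sum_congr rfl fun v _ => by simp only [Pi.smul_apply, smul_eq_mul]; ring

lemma sum_gradSq_add (S : Finset (Pt d)) (a b : Fld d) :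
    ∑ x ∈ S, gradSq (a + b) x =
      ∑ x ∈ S, gradSq a x + ∑ x ∈ S, gradSq b x + 2 * ∑ x ∈ S, bgr a b x := by
  simp only [gradSq_add]
  rw [Finset.mul_sum, ← Finset.sum_add_distrib, ← Finset.sum_add_distrib]

lemma sum_sq_add (S : Finset (Pt d)) (a b : Fld d) :
    ∑ x ∈ S, ((a + b) x) ^ 2 =
      ∑ x ∈ S, (a x) ^ 2 + ∑ x ∈ S, (b x) ^ 2 + 2 * ∑ x ∈ S, a x * b x := by
  rw [Finset.mul_sum, ← Finset.sum_add_distrib, ← Finset.sum_add_distrib]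
  exact Finset.sum_congr rfl fun x _ => by simp only [Pi.add_apply]; ring

lemma qf_add (Λf X : Finset (Pt d)) (m κ : ℝ) (a b : Fld d) :
    qf Λf X m κ (a + b) = qf Λf X m κ a + qf Λf X m κ b + bf Λf X m κ a b := by
  unfold qf energy bf
  rw [sum_gradSq_add X, sum_gradSq_add Λf, sum_sq_add Λf]
  ring

lemma qf_smul (Λf X : Finset (Pt d)) (m κ : ℝ) (t : ℝ) (a : Fld d) :
    qf Λf X m κ (t • a) = t ^ 2 * qf Λf X m κ a := by
  unfold qf energy
  simp only [gradSq_smul, Pi.smul_apply, smul_eq_mul, mul_pow]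
  rw [← Finset.mul_sum, ← Finset.mul_sum, ← Finset.mul_sum]
  ring

lemma qf_zero (Λf X : Finset (Pt d)) (m κ : ℝ) : qf Λf X m κ 0 = 0 := by
  have := qf_smul Λf X m κ 0 0
  simpa using this

lemma bgr_add_right (a b c : Fld d) (x : Pt d) :
    bgr a (b + c) x = bgr a b x + bgr a c x := by
  unfold bgr
  rw [← Finset.sum_add_distrib]
  exact Finset.sum_congr rfl fun v _ => by simp only [Pi.add_apply]; ring

lemma bgr_smul_right (t : ℝ) (a b : Fld d) (x : Pt d) :
    bgr a (t • b) x = t * bgr a b x := by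
  unfold bgr
  rw [Finset.mul_sum]
  exact Finset.sum_congr rfl fun v _ => by simp only [Pi.smul_apply, smul_eq_mul]; ring

lemma bgr_comm (a b : Fld d) (x : Pt d) : bgr a b x = bgr b a x :=
  Finset.sum_congr rfl fun v _ => by ring

lemma bf_add_right (Λf X : Finset (Pt d)) (m κ : ℝ) (a b c : Fld d) :
    bf Λf X m κ a (b + c) = bf Λf X m κ a b + bf Λf X m κ a c := by
  unfold bf
  simp only [bgr_add_right, Pi.add_apply]
  rw [Finset.sum_add_distrib, Finset.sum_add_distrib]
  have : ∑ x ∈ Λf, a x * (b x + c x) = ∑ x ∈ Λf, a x * b x + ∑ x ∈ Λf, a x * c x := by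
    rw [← Finset.sum_add_distrib]; exact Finset.sum_congr rfl fun x _ => by ring
  rw [this]; ring

lemma bf_smul_right (Λf X : Finset (Pt d)) (m κ : ℝ) (t : ℝ) (a b : Fld d) :
    bf Λf X m κ a (t • b) = t * bf Λf X m κ a b := by
  unfold bf
  simp only [bgr_smul_right, Pi.smul_apply, smul_eq_mul]
  rw [← Finset.mul_sum, ← Finset.mul_sum]
  have : ∑ x ∈ Λf, a x * (t * b x) = t * ∑ x ∈ Λf, a x * b x := by
    rw [Finset.mul_sum]; exact Finset.sum_congr rfl fun x _ => by ring
  rw [this]; ring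

lemma bf_comm (Λf X : Finset (Pt d)) (m κ : ℝ) (a b : Fld d) :
    bf Λf X m κ a b = bf Λf X m κ b a := by
  unfold bf
  simp only [bgr_comm a b]
  have : ∑ x ∈ Λf, a x * b x = ∑ x ∈ Λf, b x * a x :=
    Finset.sum_congr rfl fun x _ => by ring
  rw [this]

lemma bf_add_left (Λf X : Finset (Pt d)) (m κ : ℝ) (a b c : Fld d) :
    bf Λf X m κ (a + b) c = bf Λf X m κ a c + bf Λf X m κ b c := by
  rw [bf_comm, bf_add_right, bf_comm Λf X m κ c a, bf_comm Λf X m κ c b]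

lemma bf_smul_left (Λf X : Finset (Pt d)) (m κ : ℝ) (t : ℝ) (a b : Fld d) :
    bf Λf X m κ (t • a) b = t * bf Λf X m κ a b := by
  rw [bf_comm, bf_smul_right, bf_comm]

lemma bf_self (Λf X : Finset (Pt d)) (m κ : ℝ) (a : Fld d) :
    bf Λf X m κ a a = 2 * qf Λf X m κ a := by
  have h := qf_add Λf X m κ a a
  have h2 : a + a = (2 : ℝ) • a := by funext x; simp [Pi.smul_apply]; ring
  rw [h2, qf_smul] at h
  nlinarith [h]

lemma qf_mono (Λf : Finset (Pt d)) {X X' : Finset (Pt d)} (m : ℝ) {κ : ℝ} (hκ : 0 < κ)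
    (hXX : X ⊆ X') (χ : Fld d) : qf Λf X m κ χ ≤ qf Λf X' m κ χ := by
  unfold qf
  have : ∑ x ∈ X, gradSq χ x ≤ ∑ x ∈ X', gradSq χ x :=
    Finset.sum_le_sum_of_subset_of_nonneg hXX fun x _ _ => gradSq_nonneg χ x
  nlinarith



lemma pi_volume_univ_ne_zero (ι : Type*) [Fintype ι] :
    (volume : Measure (ι → ℝ)) Set.univ ≠ 0 := by
  rw [volume_pi, Measure.pi_univ]
  simp [Real.volume_univ]

lemma not_integrable_exp_quad_ray {g : ℝ → ℝ} {A c q : ℝ} (hq : 0 ≤ q)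
    (hg : ∀ t : ℝ, g t = Real.exp (A + t * c + t ^ 2 * q)) :
    ¬ Integrable g (volume : Measure ℝ) := by
  intro hint
  rcases le_total 0 c with hc | hc
  · have hio : IntegrableOn g (Set.Ici 0) volume := hint.integrableOn
    have hconst : IntegrableOn (fun _ : ℝ => Real.exp A) (Set.Ici 0) volume := by
      refine Integrable.mono hio aestronglyMeasurable_const ?_
      refine (ae_restrict_iff' measurableSet_Ici).mpr (Filter.Eventually.of_forall ?_)
      intro t ht
      simp only [Set.mem_Ici] at ht
      rw [hg t, Real.norm_eq_abs, Real.norm_eq_abs, abs_of_pos (Real.exp_pos _),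
        abs_of_pos (Real.exp_pos _)]
      apply Real.exp_le_exp.mpr
      nlinarith
    rw [integrableOn_const_iff] at hconst
    rcases hconst with h | h
    · exact Real.exp_ne_zero A (by simpa using h)
    · rw [Real.volume_Ici] at h; exact lt_irrefl _ h
  · have hio : IntegrableOn g (Set.Iic 0) volume := hint.integrableOn
    have hconst : IntegrableOn (fun _ : ℝ => Real.exp A) (Set.Iic 0) volume := by
      refine Integrable.mono hio aestronglyMeasurable_const ?_
      refine (ae_restrict_iff' measurableSet_Iic).mpr (Filter.Eventually.of_forall ?_)
      intro t ht
      simp only [Set.mem_Iic] at ht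
      rw [hg t, Real.norm_eq_abs, Real.norm_eq_abs, abs_of_pos (Real.exp_pos _),
        abs_of_pos (Real.exp_pos _)]
      apply Real.exp_le_exp.mpr
      nlinarith
    rw [integrableOn_const_iff] at hconst
    rcases hconst with h | h
    · exact Real.exp_ne_zero A (by simpa using h)
    · rw [Real.volume_Iic] at h; exact lt_irrefl _ h

lemma quad_neg_fin {n : ℕ} (Q : (Fin (n + 1) → ℝ) → ℝ)
    (B : (Fin (n + 1) → ℝ) → (Fin (n + 1) → ℝ) → ℝ) (hQm : Measurable Q)
    (hsmul : ∀ (t : ℝ) (a : Fin (n + 1) → ℝ), Q (t • a) = t ^ 2 * Q a)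
    (hpar : ∀ (a v : Fin (n + 1) → ℝ) (t : ℝ), Q (a + t • v) = Q a + t * B a v + t ^ 2 * Q v)
    (hQi : Integrable (fun ψ : Fin (n + 1) → ℝ => Real.exp (Q ψ)) volume) :
    ∀ v : Fin (n + 1) → ℝ, v ≠ 0 → Q v < 0 := by
  intro v hv
  by_contra hQv
  push_neg at hQv
  obtain ⟨i₀, hi₀⟩ : ∃ i, v i ≠ 0 := by
    by_contra h; push_neg at h; exact hv (funext h)
  set v' : Fin (n + 1) → ℝ := (v i₀)⁻¹ • v with hv'def
  have hv'Q : 0 ≤ Q v' := by rw [hv'def, hsmul]; positivity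
  have hv'i₀ : v' i₀ = 1 := by
    simp only [hv'def, Pi.smul_apply, smul_eq_mul]
    field_simp
  set u : Fin (n + 1) → ℝ := v' - Pi.single i₀ 1 with hudef
  have hui₀ : u i₀ = 0 := by simp [hudef, hv'i₀]
  -- the shear
  let S : (Fin (n + 1) → ℝ) ≃ₗ[ℝ] (Fin (n + 1) → ℝ) :=
    { toFun := fun ψ => ψ + ψ i₀ • u
      invFun := fun ψ => ψ - ψ i₀ • u
      map_add' := by
        intro ψ ψ'; funext j
        simp only [Pi.add_apply, Pi.smul_apply, smul_eq_mul]
        ring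
      map_smul' := by
        intro t ψ; funext j
        simp only [Pi.add_apply, Pi.smul_apply, smul_eq_mul, RingHom.id_apply]
        ring
      left_inv := by
        intro ψ; funext j
        simp only [Pi.add_apply, Pi.sub_apply, Pi.smul_apply, smul_eq_mul, hui₀]
        ring
      right_inv := by
        intro ψ; funext j
        simp only [Pi.add_apply, Pi.sub_apply, Pi.smul_apply, smul_eq_mul, hui₀]
        ring }
  have hSapply : ∀ ψ : Fin (n + 1) → ℝ, S ψ = ψ + ψ i₀ • u := fun _ => rfl
  have hdet : LinearMap.det (S : (Fin (n + 1) → ℝ) →ₗ[ℝ] (Fin (n + 1) → ℝ)) ≠ 0 :=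
    (LinearEquiv.isUnit_det' S).ne_zero
  have hSmeas : Measurable (S : (Fin (n + 1) → ℝ) → (Fin (n + 1) → ℝ)) :=
    (S : (Fin (n + 1) → ℝ) →ₗ[ℝ] (Fin (n + 1) → ℝ)).continuous_of_finiteDimensional.measurable
  -- integrability of exp ∘ Q ∘ S
  have hint2 : Integrable (fun ψ : Fin (n + 1) → ℝ => Real.exp (Q (S ψ))) volume := by
    have hmap : Measure.map (S : (Fin (n + 1) → ℝ) →ₗ[ℝ] (Fin (n + 1) → ℝ)) volume =
        ENNReal.ofReal |(LinearMap.det (S : (Fin (n + 1) → ℝ) →ₗ[ℝ] (Fin (n + 1) → ℝ)))⁻¹| •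
          volume :=
      Real.map_linearMap_volume_pi_eq_smul_volume_pi hdet
    have h1 : Integrable (fun ψ : Fin (n + 1) → ℝ => Real.exp (Q ψ))
        (Measure.map (S : (Fin (n + 1) → ℝ) →ₗ[ℝ] (Fin (n + 1) → ℝ)) volume) := by
      rw [hmap]
      refine (integrable_smul_measure ?_ ENNReal.ofReal_ne_top).mpr hQi
      simp only [ne_eq, ENNReal.ofReal_eq_zero, not_le]
      exact abs_pos.mpr (inv_ne_zero hdet)
    exact (integrable_map_measure
      ((Real.measurable_exp.comp hQm).aestronglyMeasurable) hSmeas.aemeasurable).mp h1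
  -- split off coordinate i₀
  let e := MeasurableEquiv.piFinSuccAbove (fun _ : Fin (n + 1) => ℝ) i₀
  have hep : MeasurePreserving e volume volume :=
    volume_preserving_piFinSuccAbove (fun _ : Fin (n + 1) => ℝ) i₀
  have hFi : Integrable (fun y : ℝ × (Fin n → ℝ) =>
      Real.exp (Q (S (e.symm y)))) ((volume : Measure ℝ).prod volume) := by
    have h0 : Integrable (fun y : ℝ × (Fin n → ℝ) =>
        Real.exp (Q (S (e.symm y)))) volume := by
      rw [← hep.map_eq]
      refine (integrable_map_equiv e _).mpr ?_
      have heq : ((fun y : ℝ × (Fin n → ℝ) => Real.exp (Q (S (e.symm y)))) ∘ ⇑e) =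
          fun ψ => Real.exp (Q (S ψ)) := by
        funext ψ
        simp only [Function.comp_apply, MeasurableEquiv.symm_apply_apply]
      rw [heq]; exact hint2
    exact h0
  have hslice := hFi.prod_left_ae
  -- for every w the slice is not integrable
  have hnone : ∀ w : Fin n → ℝ,
      ¬ Integrable (fun t : ℝ => Real.exp (Q (S (e.symm (t, w))))) volume := by
    intro w hw
    set wt : Fin (n + 1) → ℝ := Fin.insertNth i₀ (0 : ℝ) w with hwt
    have hcomb : ∀ t : ℝ,
        (e.symm (t, w)) = wt + t • (Pi.single i₀ 1 : Fin (n + 1) → ℝ) := by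
      intro t
      have h1 : (e.symm (t, w)) = Fin.insertNth i₀ t w := rfl
      rw [h1]
      funext k
      by_cases hk : k = i₀
      · subst hk
        simp [hwt, Fin.insertNth_apply_same, Pi.single_eq_same]
      · obtain ⟨j, hj⟩ := Fin.exists_succAbove_eq hk
        rw [← hj]
        simp [hwt, Fin.insertNth_apply_succAbove, Pi.single_eq_of_ne (Fin.succAbove_ne i₀ j)]
    have hSδ : S (Pi.single i₀ 1) = v' := by
      rw [hSapply]
      simp only [Pi.single_eq_same, one_smul, hudef]
      funext j; simp
    have hkey : ∀ t : ℝ, Q (S (e.symm (t, w))) =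
        Q (S wt) + t * B (S wt) v' + t ^ 2 * Q v' := by
      intro t
      rw [hcomb t, map_add, _root_.map_smul, hSδ, hpar]
    exact not_integrable_exp_quad_ray hv'Q (fun t => by rw [hkey t]) hw
  have hfalse : ∀ᵐ w : Fin n → ℝ ∂volume, False := by
    filter_upwards [hslice] with w hw
    exact hnone w hw
  rw [ae_iff] at hfalse
  simp only [not_false_eq_true, Set.setOf_true] at hfalse
  exact pi_volume_univ_ne_zero _ hfalse

lemma quad_neg {ι : Type*} [Fintype ι] (Q : (ι → ℝ) → ℝ)
    (B : (ι → ℝ) → (ι → ℝ) → ℝ) (hQm : Measurable Q)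
    (hsmul : ∀ (t : ℝ) (a : ι → ℝ), Q (t • a) = t ^ 2 * Q a)
    (hpar : ∀ (a v : ι → ℝ) (t : ℝ), Q (a + t • v) = Q a + t * B a v + t ^ 2 * Q v)
    (hQi : Integrable (fun ψ : ι → ℝ => Real.exp (Q ψ)) volume) :
    ∀ v : ι → ℝ, v ≠ 0 → Q v < 0 := by
  intro v hv
  obtain ⟨i₀, hi₀⟩ : ∃ i, v i ≠ 0 := by
    by_contra h; push_neg at h; exact hv (funext h)
  -- transfer to Fin (n+1)
  let σ := Fintype.equivFin ι
  obtain ⟨n, hn⟩ : ∃ n, Fintype.card ι = n + 1 :=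
    ⟨Fintype.card ι - 1, (Nat.succ_pred_eq_of_pos (Fintype.card_pos_iff.mpr ⟨i₀⟩)).symm⟩
  let σ' : ι ≃ Fin (n + 1) := σ.trans (finCongr hn)
  let E := MeasurableEquiv.piCongrLeft (fun _ : ι => ℝ) σ'.symm
  have hE : ∀ (ψ : Fin (n + 1) → ℝ) (i : ι), E ψ i = ψ (σ' i) := by
    intro ψ i
    have h := MeasurableEquiv.piCongrLeft_apply_apply (β := fun _ : ι => ℝ) σ'.symm ψ (σ' i)
    simpa using h
  have hEp : MeasurePreserving E volume volume :=
    volume_measurePreserving_piCongrLeft (fun _ : ι => ℝ) σ'.symm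
  set Q' : (Fin (n + 1) → ℝ) → ℝ := fun ψ => Q (E ψ) with hQ'def
  set B' : (Fin (n + 1) → ℝ) → (Fin (n + 1) → ℝ) → ℝ := fun a b => B (E a) (E b) with hB'def
  have hEadd : ∀ a b : Fin (n + 1) → ℝ, E (a + b) = E a + E b := by
    intro a b; funext i; simp [hE]
  have hEsmul : ∀ (t : ℝ) (a : Fin (n + 1) → ℝ), E (t • a) = t • E a := by
    intro t a; funext i; simp [hE]
  have hQ'm : Measurable Q' := hQm.comp E.measurable
  have hsmul' : ∀ (t : ℝ) (a : Fin (n + 1) → ℝ), Q' (t • a) = t ^ 2 * Q' a := by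
    intro t a; rw [hQ'def]; simp only [hEsmul, hsmul]
  have hpar' : ∀ (a w : Fin (n + 1) → ℝ) (t : ℝ),
      Q' (a + t • w) = Q' a + t * B' a w + t ^ 2 * Q' w := by
    intro a w t; simp only [hQ'def, hB'def, hEadd, hEsmul, hpar]
  have hQ'i : Integrable (fun ψ : Fin (n + 1) → ℝ => Real.exp (Q' ψ)) volume := by
    have := (integrable_map_equiv E (fun ψ : ι → ℝ => Real.exp (Q ψ))).mp
      (by rw [hEp.map_eq]; exact hQi)
    exact this
  set w : Fin (n + 1) → ℝ := fun j => v (σ'.symm j) with hwdef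
  have hEw : E w = v := by
    funext i; simp [hE, hwdef]
  have hw0 : w ≠ 0 := by
    intro h
    apply hi₀
    have := congrFun h (σ' i₀)
    simpa [hwdef] using this
  have h2 : Q (E w) < 0 := quad_neg_fin Q' B' hQ'm hsmul' hpar' hQ'i w hw0
  rwa [hEw] at h2


variable {d : ℕ}

lemma meas_paste_apply (Y : Finset (Pt d)) (φ : Fld d) (z : Pt d) :
    Measurable fun ψ : ↥Y → ℝ => paste Y φ ψ z := by
  unfold paste
  by_cases h : z ∈ Y
  · simpa [h] using measurable_pi_apply (⟨z, h⟩ : ↥Y)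
  · simpa [h] using measurable_const

lemma meas_qf_paste (Λf X Y : Finset (Pt d)) (m κ : ℝ) (φ : Fld d) :
    Measurable fun ψ : ↥Y → ℝ => qf Λf X m κ (paste Y φ ψ) := by
  have hz := meas_paste_apply (d := d) Y φ
  have hgs : ∀ x : Pt d, Measurable fun ψ : ↥Y → ℝ => gradSq (paste Y φ ψ) x := by
    intro x
    unfold gradSq
    exact Finset.measurable_sum _ fun v _ => ((hz _).sub (hz _)).pow_const 2
  have hsum1 : ∀ S : Finset (Pt d),
      Measurable fun ψ : ↥Y → ℝ => ∑ x ∈ S, gradSq (paste Y φ ψ) x :=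
    fun S => Finset.measurable_sum _ fun x _ => hgs x
  have hsum2 : Measurable fun ψ : ↥Y → ℝ => ∑ x ∈ Λf, (paste Y φ ψ x) ^ 2 :=
    Finset.measurable_sum _ fun x _ => (hz x).pow_const 2
  unfold qf energy
  exact (measurable_const.mul (hsum1 X)).sub
    ((measurable_const.mul (hsum1 Λf)).add (measurable_const.mul hsum2))

/-- The basic Gaussian-type integral. -/
noncomputable def II (Λf : Finset (Pt d)) (m κ : ℝ) (X Y : Finset (Pt d)) (φ : Fld d) : ℝ :=
  ∫ ψ : ↥Y → ℝ, Real.exp (qf Λf X m κ (paste Y φ ψ))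

lemma integrand_eq (Λf X Y : Finset (Pt d)) (m κ : ℝ) (φ : Fld d) :
    (fun ψ : ↥Y → ℝ => Real.exp (κ / 4 * ∑ x ∈ X, gradSq (paste Y φ ψ) x) *
      Real.exp (-energy Λf m (paste Y φ ψ))) =
      fun ψ : ↥Y → ℝ => Real.exp (qf Λf X m κ (paste Y φ ψ)) := by
  funext ψ
  rw [← Real.exp_add]
  exact congrArg Real.exp (sub_eq_add_neg _ _).symm

lemma II_pos (Λf X Y : Finset (Pt d)) (m κ : ℝ) (φ : Fld d)
    (h : Integrable (fun ψ : ↥Y → ℝ => Real.exp (qf Λf X m κ (paste Y φ ψ))) volume) :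
    0 < II Λf m κ X Y φ := by
  rw [II, integral_pos_iff_support_of_nonneg_ae
    (Filter.Eventually.of_forall fun ψ => (Real.exp_pos _).le) h]
  have hsupp : Function.support
      (fun ψ : ↥Y → ℝ => Real.exp (qf Λf X m κ (paste Y φ ψ))) = Set.univ :=
    Set.eq_univ_iff_forall.mpr fun ψ => Real.exp_ne_zero _
  rw [hsupp]
  exact pos_iff_ne_zero.mpr (pi_volume_univ_ne_zero _)

lemma condExp_eq (Λf Y X : Finset (Pt d)) (m κ : ℝ) (φ : Fld d) :
    condExp Λf Y m (fun χ => Real.exp (κ / 4 * ∑ x ∈ X, gradSq χ x)) φ =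
      II Λf m κ X Y φ / II Λf m κ ∅ Y φ := by
  have h1 := integrand_eq Λf X Y m κ φ
  have h2 : (fun ψ : ↥Y → ℝ => Real.exp (-energy Λf m (paste Y φ ψ))) =
      fun ψ : ↥Y → ℝ => Real.exp (qf Λf ∅ m κ (paste Y φ ψ)) := by
    funext ψ
    congr 1
    unfold qf
    simp
  unfold _root_.condExp II
  rw [h1, h2]

lemma exists_shift (Λf : Finset (Pt d)) (m κ : ℝ) (X Y : Finset (Pt d))
    (hI0 : Integrable (fun ψ : ↥Y → ℝ =>
      Real.exp (qf Λf X m κ (paste Y (0 : Fld d) ψ))) volume) (φ : Fld d) :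
    ∃ M : ℝ, II Λf m κ X Y φ = Real.exp M * II Λf m κ X Y 0 ∧
      (∀ ψ : ↥Y → ℝ, qf Λf X m κ (paste Y φ ψ) ≤ M) ∧
      (∃ ψ₀ : ↥Y → ℝ, M = qf Λf X m κ (paste Y φ ψ₀)) := by
  classical
  set Q : (↥Y → ℝ) → ℝ := fun w => qf Λf X m κ (tl Y w) with hQdef
  have hQm : Measurable Q := meas_qf_paste Λf X Y m κ 0
  have hsmul : ∀ (t : ℝ) (a : ↥Y → ℝ), Q (t • a) = t ^ 2 * Q a := by
    intro t a
    simp only [hQdef]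
    rw [tl_smul, qf_smul]
  have hpar : ∀ (a v : ↥Y → ℝ) (t : ℝ), Q (a + t • v) =
      Q a + t * bf Λf X m κ (tl Y a) (tl Y v) + t ^ 2 * Q v := by
    intro a v t
    simp only [hQdef]
    rw [tl_add, tl_smul, qf_add, qf_smul, bf_smul_right]
    ring
  have hneg : ∀ w : ↥Y → ℝ, w ≠ 0 → Q w < 0 :=
    quad_neg Q (fun a v => bf Λf X m κ (tl Y a) (tl Y v)) hQm hsmul hpar hI0
  have hnonpos : ∀ w : ↥Y → ℝ, Q w ≤ 0 := by
    intro w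
    by_cases h : w = 0
    · subst h
      simp only [hQdef]
      rw [tl_zero, qf_zero]
    · exact (hneg w h).le
  set bar : Fld d := paste Y φ 0 with hbar
  -- linear functional in the first argument
  let L : Fld d → ((↥Y → ℝ) →ₗ[ℝ] ℝ) := fun c =>
    { toFun := fun w => bf Λf X m κ (tl Y w) c
      map_add' := fun a b => by
        show bf Λf X m κ (tl Y (a + b)) c = bf Λf X m κ (tl Y a) c + bf Λf X m κ (tl Y b) c
        rw [tl_add, bf_add_left]
      map_smul' := fun t a => by
        show bf Λf X m κ (tl Y (t • a)) c = t * bf Λf X m κ (tl Y a) c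
        rw [tl_smul, bf_smul_left] }
  have hLsum : ∀ (c : Fld d) (w : ↥Y → ℝ), bf Λf X m κ (tl Y w) c =
      ∑ i : ↥Y, w i * bf Λf X m κ (tl Y (Pi.single i 1)) c := by
    intro c w
    have h1 : ∑ i : ↥Y, Pi.single i (w i) = w := Finset.univ_sum_single w
    calc bf Λf X m κ (tl Y w) c = L c w := rfl
      _ = L c (∑ i : ↥Y, Pi.single i (w i)) := by rw [h1]
      _ = ∑ i : ↥Y, L c (Pi.single i (w i)) := map_sum (L c) _ _
      _ = ∑ i : ↥Y, w i * bf Λf X m κ (tl Y (Pi.single i 1)) c := by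
          refine Finset.sum_congr rfl fun i _ => ?_
          have h3 : Pi.single i (w i) = w i • (Pi.single i 1 : ↥Y → ℝ) := by
            funext j
            by_cases h : j = i
            · subst h; simp
            · simp [Pi.single_eq_of_ne h]
          rw [h3, _root_.map_smul, smul_eq_mul]
          rfl
  -- the linear endomorphism
  let R : Fld d → ((↥Y → ℝ) →ₗ[ℝ] ℝ) := fun a =>
    { toFun := fun u => bf Λf X m κ a (tl Y u)
      map_add' := fun u v => by
        show bf Λf X m κ a (tl Y (u + v)) = bf Λf X m κ a (tl Y u) + bf Λf X m κ a (tl Y v)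
        rw [tl_add, bf_add_right]
      map_smul' := fun t u => by
        show bf Λf X m κ a (tl Y (t • u)) = t * bf Λf X m κ a (tl Y u)
        rw [tl_smul, bf_smul_right] }
  let T : (↥Y → ℝ) →ₗ[ℝ] (↥Y → ℝ) := LinearMap.pi fun i => R (tl Y (Pi.single i 1))
  have hTapp : ∀ (u : ↥Y → ℝ) (i : ↥Y),
      T u i = bf Λf X m κ (tl Y (Pi.single i 1)) (tl Y u) := fun u i => rfl
  have hTinj : Function.Injective T := by
    refine (injective_iff_map_eq_zero T).mpr ?_
    intro u hu
    by_contra hne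
    have h1 : bf Λf X m κ (tl Y u) (tl Y u) = 0 := by
      rw [hLsum (tl Y u) u]
      refine Finset.sum_eq_zero fun i _ => ?_
      have h2 : bf Λf X m κ (tl Y (Pi.single i 1)) (tl Y u) = T u i := rfl
      rw [h2, hu]
      simp
    have h3 : bf Λf X m κ (tl Y u) (tl Y u) = 2 * Q u := bf_self Λf X m κ (tl Y u)
    have h4 : Q u < 0 := hneg u hne
    rw [h3] at h1
    linarith
  have hTsurj : Function.Surjective T := LinearMap.injective_iff_surjective.mp hTinj
  obtain ⟨ψs, hψs⟩ := hTsurj (fun i => - bf Λf X m κ (tl Y (Pi.single i 1)) bar)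
  have horth : ∀ u : ↥Y → ℝ, bf Λf X m κ (tl Y u) (tl Y ψs + bar) = 0 := by
    intro u
    rw [bf_add_right, hLsum (tl Y ψs) u, hLsum bar u, ← Finset.sum_add_distrib]
    refine Finset.sum_eq_zero fun i _ => ?_
    have h1 : bf Λf X m κ (tl Y (Pi.single i 1)) (tl Y ψs) = T ψs i := rfl
    rw [h1, hψs]
    ring
  set M : ℝ := qf Λf X m κ (tl Y ψs + bar) with hM
  have hkey : ∀ ψ : ↥Y → ℝ, qf Λf X m κ (paste Y φ ψ) = Q (ψ - ψs) + M := by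
    intro ψ
    have hdec : paste Y φ ψ = tl Y (ψ - ψs) + (tl Y ψs + bar) := by
      rw [paste_decomp Y φ ψ, ← hbar, tl_sub]
      funext z
      simp only [Pi.add_apply, Pi.sub_apply]
      ring
    rw [hdec, qf_add, horth (ψ - ψs), add_zero, ← hM]
  refine ⟨M, ?_, ?_, ⟨ψs, ?_⟩⟩
  · have hfun : (fun ψ : ↥Y → ℝ => Real.exp (qf Λf X m κ (paste Y φ ψ))) =
        fun ψ : ↥Y → ℝ => (fun ξ : ↥Y → ℝ => Real.exp (Q ξ + M)) (ψ - ψs) :=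
      funext fun ψ => by rw [hkey ψ]
    rw [II, hfun, integral_sub_right_eq_self (fun ξ : ↥Y → ℝ => Real.exp (Q ξ + M)) ψs]
    have hfun2 : (fun ξ : ↥Y → ℝ => Real.exp (Q ξ + M)) =
        fun ξ : ↥Y → ℝ => Real.exp (Q ξ) * Real.exp M :=
      funext fun ξ => by rw [Real.exp_add]
    rw [hfun2, integral_mul_const, mul_comm, II]
    rfl
  · intro ψ
    rw [hkey ψ]
    have := hnonpos (ψ - ψs)
    linarith
  · have hdec : paste Y φ ψs = tl Y ψs + bar := by rw [paste_decomp Y φ ψs, ← hbar]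
    rw [hM, hdec]

lemma factorize (Λf : Finset (Pt d)) (m κ : ℝ) (X₁ Y₁ X₂ Y₂ : Finset (Pt d))
    (hXY₁ : X₁ ⊆ Y₁) (hXY₂ : X₂ ⊆ Y₂)
    (hdisj : Disjoint (closStar Y₁) (closStar Y₂)) (φ : Fld d) :
    II Λf m κ (X₁ ∪ X₂) (Y₁ ∪ Y₂) φ =
      Real.exp (energy Λf m φ) * (II Λf m κ X₁ Y₁ φ * II Λf m κ X₂ Y₂ φ) := by
  classical
  have hns₁ : ∀ {z : Pt d}, z ∈ closStar Y₁ → z ∉ Y₂ := fun hz h2 =>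
    Set.disjoint_left.mp hdisj hz (mem_closStar_of_mem h2)
  have hns₂ : ∀ {z : Pt d}, z ∈ closStar Y₂ → z ∉ Y₁ := fun hz h1 =>
    Set.disjoint_right.mp hdisj hz (mem_closStar_of_mem h1)
  have hmem : ∀ i : ↥(Y₁ ∪ Y₂), (i : Pt d) ∉ Y₁ → (i : Pt d) ∈ Y₂ := fun i h =>
    (Finset.mem_union.mp i.2).resolve_left h
  set p : ↥(Y₁ ∪ Y₂) → Prop := fun i => (i : Pt d) ∈ Y₁ with hp
  let e₁ : ↥Y₁ ≃ {i : ↥(Y₁ ∪ Y₂) // p i} :=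
    { toFun := fun x => ⟨⟨(x : Pt d), Finset.mem_union_left _ x.2⟩, x.2⟩
      invFun := fun j => ⟨((j : ↥(Y₁ ∪ Y₂)) : Pt d), j.2⟩
      left_inv := fun x => rfl
      right_inv := fun j => Subtype.ext (Subtype.ext rfl) }
  let e₂ : ↥Y₂ ≃ {i : ↥(Y₁ ∪ Y₂) // ¬ p i} :=
    { toFun := fun x => ⟨⟨(x : Pt d), Finset.mem_union_right _ x.2⟩,
        hns₂ (mem_closStar_of_mem x.2)⟩
      invFun := fun j => ⟨((j : ↥(Y₁ ∪ Y₂)) : Pt d), hmem _ j.2⟩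
      left_inv := fun x => rfl
      right_inv := fun j => Subtype.ext (Subtype.ext rfl) }
  let E₁ := MeasurableEquiv.piCongrLeft (fun _ : {i : ↥(Y₁ ∪ Y₂) // p i} => ℝ) e₁
  let E₂ := MeasurableEquiv.piCongrLeft (fun _ : {i : ↥(Y₁ ∪ Y₂) // ¬ p i} => ℝ) e₂
  let e := MeasurableEquiv.piEquivPiSubtypeProd (fun _ : ↥(Y₁ ∪ Y₂) => ℝ) p
  let G := (MeasurableEquiv.prodCongr E₁ E₂).trans e.symm
  have hE₁p : MeasurePreserving E₁ volume volume :=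
    volume_measurePreserving_piCongrLeft _ e₁
  have hE₂p : MeasurePreserving E₂ volume volume :=
    volume_measurePreserving_piCongrLeft _ e₂
  have hev : MeasurePreserving e volume volume :=
    volume_preserving_piEquivPiSubtypeProd (fun _ : ↥(Y₁ ∪ Y₂) => ℝ) p
  have hGp : MeasurePreserving G volume volume := by
    have h1 : MeasurePreserving (Prod.map E₁ E₂) volume volume := hE₁p.prod hE₂p
    have h2 : MeasurePreserving e.symm volume volume := hev.symm e
    exact h2.comp h1
  -- the combined field
  have hGapply : ∀ (ψ₁ : ↥Y₁ → ℝ) (ψ₂ : ↥Y₂ → ℝ) (i : ↥(Y₁ ∪ Y₂)),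
      G (ψ₁, ψ₂) i = if h : (i : Pt d) ∈ Y₁ then ψ₁ ⟨i, h⟩ else ψ₂ ⟨i, hmem i h⟩ := by
    intro ψ₁ ψ₂ i
    have h0 : G (ψ₁, ψ₂) i = e.symm (E₁ ψ₁, E₂ ψ₂) i := rfl
    rw [h0]
    have h1 : e.symm (E₁ ψ₁, E₂ ψ₂) i =
        if h : p i then E₁ ψ₁ ⟨i, h⟩ else E₂ ψ₂ ⟨i, h⟩ := by
      exact congrFun (rfl) i
    rw [h1]
    by_cases h : p i
    · rw [dif_pos h, dif_pos h]
      have h5 : (⟨i, h⟩ : {j : ↥(Y₁ ∪ Y₂) // p j}) = e₁ ⟨(i : Pt d), h⟩ :=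
        Subtype.ext (Subtype.ext rfl)
      rw [h5]
      exact MeasurableEquiv.piCongrLeft_apply_apply (β := fun _ : {j : ↥(Y₁ ∪ Y₂) // p j} => ℝ)
        e₁ ψ₁ ⟨(i : Pt d), h⟩
    · rw [dif_neg h, dif_neg h]
      have h5 : (⟨i, h⟩ : {j : ↥(Y₁ ∪ Y₂) // ¬ p j}) = e₂ ⟨(i : Pt d), hmem i h⟩ :=
        Subtype.ext (Subtype.ext rfl)
      rw [h5]
      exact MeasurableEquiv.piCongrLeft_apply_apply (β := fun _ : {j : ↥(Y₁ ∪ Y₂) // ¬ p j} => ℝ)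
        e₂ ψ₂ ⟨(i : Pt d), hmem i h⟩
  -- pointwise field identities
  have hχ1 : ∀ (ψ₁ : ↥Y₁ → ℝ) (ψ₂ : ↥Y₂ → ℝ) (z : Pt d), z ∉ Y₂ →
      paste (Y₁ ∪ Y₂) φ (G (ψ₁, ψ₂)) z = paste Y₁ φ ψ₁ z := by
    intro ψ₁ ψ₂ z hz2
    by_cases hz1 : z ∈ Y₁
    · rw [paste_mem φ _ (Finset.mem_union_left _ hz1), paste_mem φ ψ₁ hz1,
        hGapply ψ₁ ψ₂ ⟨z, Finset.mem_union_left _ hz1⟩, dif_pos hz1]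
    · have hz12 : z ∉ Y₁ ∪ Y₂ := fun h =>
        ((Finset.mem_union.mp h).elim hz1 hz2)
      rw [paste_not_mem φ _ hz12, paste_not_mem φ ψ₁ hz1]
  have hχ2 : ∀ (ψ₁ : ↥Y₁ → ℝ) (ψ₂ : ↥Y₂ → ℝ) (z : Pt d), z ∉ Y₁ →
      paste (Y₁ ∪ Y₂) φ (G (ψ₁, ψ₂)) z = paste Y₂ φ ψ₂ z := by
    intro ψ₁ ψ₂ z hz1
    by_cases hz2 : z ∈ Y₂
    · rw [paste_mem φ _ (Finset.mem_union_right _ hz2), paste_mem φ ψ₂ hz2,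
        hGapply ψ₁ ψ₂ ⟨z, Finset.mem_union_right _ hz2⟩, dif_neg hz1]
    · have hz12 : z ∉ Y₁ ∪ Y₂ := fun h =>
        ((Finset.mem_union.mp h).elim hz1 hz2)
      rw [paste_not_mem φ _ hz12, paste_not_mem φ ψ₂ hz2]
  -- the integrand identity
  have hint_eq : ∀ (ψ₁ : ↥Y₁ → ℝ) (ψ₂ : ↥Y₂ → ℝ),
      Real.exp (qf Λf (X₁ ∪ X₂) m κ (paste (Y₁ ∪ Y₂) φ (G (ψ₁, ψ₂)))) =
      Real.exp (energy Λf m φ) *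
        (Real.exp (qf Λf X₁ m κ (paste Y₁ φ ψ₁)) *
          Real.exp (qf Λf X₂ m κ (paste Y₂ φ ψ₂))) := by
    intro ψ₁ ψ₂
    set χ : Fld d := paste (Y₁ ∪ Y₂) φ (G (ψ₁, ψ₂)) with hχ
    set χ₁ : Fld d := paste Y₁ φ ψ₁ with hχ₁
    set χ₂ : Fld d := paste Y₂ φ ψ₂ with hχ₂
    have hedge : ∀ x : Pt d, ∀ v ∈ dirs d,
        (χ (x + v) - χ x) ^ 2 + (φ (x + v) - φ x) ^ 2 =
        (χ₁ (x + v) - χ₁ x) ^ 2 + (χ₂ (x + v) - χ₂ x) ^ 2 := by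
      intro x v hv
      by_cases h2 : x ∈ Y₂ ∨ x + v ∈ Y₂
      · have hxcl : x ∈ closStar Y₂ :=
          h2.elim mem_closStar_of_mem (fun h => mem_closStar_of_add_mem h hv)
        have hxvcl : x + v ∈ closStar Y₂ :=
          h2.elim (fun h => add_mem_closStar h hv) mem_closStar_of_mem
        have hx1 : x ∉ Y₁ := hns₂ hxcl
        have hxv1 : x + v ∉ Y₁ := hns₂ hxvcl
        rw [hχ, hχ₁, hχ2 ψ₁ ψ₂ x hx1, hχ2 ψ₁ ψ₂ (x + v) hxv1,
          paste_not_mem φ ψ₁ hx1, paste_not_mem φ ψ₁ hxv1]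
        ring
      · push_neg at h2
        rw [hχ, hχ₂, hχ1 ψ₁ ψ₂ x h2.1, hχ1 ψ₁ ψ₂ (x + v) h2.2,
          paste_not_mem φ ψ₂ h2.1, paste_not_mem φ ψ₂ h2.2]
    have hpt : ∀ x : Pt d, (χ x) ^ 2 + (φ x) ^ 2 = (χ₁ x) ^ 2 + (χ₂ x) ^ 2 := by
      intro x
      by_cases h2 : x ∈ Y₂
      · have hx1 : x ∉ Y₁ := hns₂ (mem_closStar_of_mem h2)
        rw [hχ, hχ₁, hχ2 ψ₁ ψ₂ x hx1, paste_not_mem φ ψ₁ hx1]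
        ring
      · rw [hχ, hχ₂, hχ1 ψ₁ ψ₂ x h2, paste_not_mem φ ψ₂ h2]
    have hgs : ∀ x : Pt d, gradSq χ x + gradSq φ x = gradSq χ₁ x + gradSq χ₂ x := by
      intro x
      unfold gradSq
      rw [← Finset.sum_add_distrib, ← Finset.sum_add_distrib]
      exact Finset.sum_congr rfl fun v hv => hedge x v hv
    have hA : ∑ x ∈ Λf, gradSq χ x + ∑ x ∈ Λf, gradSq φ x =
        ∑ x ∈ Λf, gradSq χ₁ x + ∑ x ∈ Λf, gradSq χ₂ x := by
      rw [← Finset.sum_add_distrib, ← Finset.sum_add_distrib]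
      exact Finset.sum_congr rfl fun x _ => hgs x
    have hB : ∑ x ∈ Λf, (χ x) ^ 2 + ∑ x ∈ Λf, (φ x) ^ 2 =
        ∑ x ∈ Λf, (χ₁ x) ^ 2 + ∑ x ∈ Λf, (χ₂ x) ^ 2 := by
      rw [← Finset.sum_add_distrib, ← Finset.sum_add_distrib]
      exact Finset.sum_congr rfl fun x _ => hpt x
    have henergy : energy Λf m χ + energy Λf m φ =
        energy Λf m χ₁ + energy Λf m χ₂ := by
      unfold energy
      linear_combination (1 / 4 : ℝ) * hA + (m ^ 2 / 2) * hB
    have hdisjX : Disjoint X₁ X₂ := by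
      rw [Finset.disjoint_left]
      intro a ha1 ha2
      exact hns₁ (mem_closStar_of_mem (hXY₁ ha1)) (hXY₂ ha2)
    have hX : ∑ x ∈ X₁ ∪ X₂, gradSq χ x =
        ∑ x ∈ X₁, gradSq χ₁ x + ∑ x ∈ X₂, gradSq χ₂ x := by
      rw [Finset.sum_union hdisjX]
      congr 1
      · refine Finset.sum_congr rfl fun x hx => ?_
        have hx1 : x ∈ Y₁ := hXY₁ hx
        unfold gradSq
        refine Finset.sum_congr rfl fun v hv => ?_
        rw [hχ, hχ₁, hχ1 ψ₁ ψ₂ x (hns₁ (mem_closStar_of_mem hx1)),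
          hχ1 ψ₁ ψ₂ (x + v) (hns₁ (add_mem_closStar hx1 hv))]
      · refine Finset.sum_congr rfl fun x hx => ?_
        have hx2 : x ∈ Y₂ := hXY₂ hx
        unfold gradSq
        refine Finset.sum_congr rfl fun v hv => ?_
        rw [hχ, hχ₂, hχ2 ψ₁ ψ₂ x (hns₂ (mem_closStar_of_mem hx2)),
          hχ2 ψ₁ ψ₂ (x + v) (hns₂ (add_mem_closStar hx2 hv))]
    rw [← Real.exp_add, ← Real.exp_add]
    congr 1
    unfold qf
    linear_combination (κ / 4 : ℝ) * hX - henergy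
  -- put the integrals together
  have hemb : MeasurableEmbedding (⇑G) := G.measurableEmbedding
  have hstep : II Λf m κ (X₁ ∪ X₂) (Y₁ ∪ Y₂) φ =
      ∫ y : (↥Y₁ → ℝ) × (↥Y₂ → ℝ),
        Real.exp (qf Λf (X₁ ∪ X₂) m κ (paste (Y₁ ∪ Y₂) φ (G y))) := by
    rw [II]
    exact (hGp.integral_comp hemb _).symm
  rw [hstep]
  have hstep2 : (fun y : (↥Y₁ → ℝ) × (↥Y₂ → ℝ) =>
      Real.exp (qf Λf (X₁ ∪ X₂) m κ (paste (Y₁ ∪ Y₂) φ (G y)))) =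
      fun y : (↥Y₁ → ℝ) × (↥Y₂ → ℝ) => Real.exp (energy Λf m φ) *
        ((fun ψ₁ => Real.exp (qf Λf X₁ m κ (paste Y₁ φ ψ₁))) y.1 *
          (fun ψ₂ => Real.exp (qf Λf X₂ m κ (paste Y₂ φ ψ₂))) y.2) := by
    funext y
    exact hint_eq y.1 y.2
  rw [hstep2, integral_const_mul]
  congr 1
  rw [II, II]
  exact integral_prod_mul (L := ℝ) (μ := (volume : Measure (↥Y₁ → ℝ)))
    (ν := (volume : Measure (↥Y₂ → ℝ)))
    (fun ψ₁ => Real.exp (qf Λf X₁ m κ (paste Y₁ φ ψ₁)))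
    (fun ψ₂ => Real.exp (qf Λf X₂ m κ (paste Y₂ φ ψ₂)))

end Stmt14Aux

open Stmt14Aux

/-- properties of the regulator `G(X,Y)`:
(i) it equals `1` when the conditioning field vanishes;
(ii) it factorizes: `G(X₁,Y₁)G(X₂,Y₂) = G(X₁∪X₂, Y₁∪Y₂)` when `Y₁∪∂Y₁` and `Y₂∪∂Y₂`
are disjoint; (iii) for fixed `Y` it is monotone increasing in `X ⊆ Y`. -/
theorem stmt14 {d : ℕ} (Λf : Finset (Pt d)) (m κ : ℝ) (hm : 0 < m) (hκ : 0 < κ)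
    (hint : ∀ (X Y : Finset (Pt d)) (φ : Fld d), X ⊆ Y → Y ⊆ Λf →
      Integrable (fun ψ : ↥Y → ℝ =>
        Real.exp (κ / 4 * ∑ x ∈ X, gradSq (paste Y φ ψ) x) *
          Real.exp (-energy Λf m (paste Y φ ψ)))) :
    (∀ X Y : Finset (Pt d), X ⊆ Y → Y ⊆ Λf → reg Λf m κ X Y 0 = 1) ∧
    (∀ X₁ Y₁ X₂ Y₂ : Finset (Pt d), X₁ ⊆ Y₁ → X₂ ⊆ Y₂ → Y₁ ⊆ Λf → Y₂ ⊆ Λf →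
      Disjoint (closStar Y₁) (closStar Y₂) →
      ∀ φ : Fld d,
        reg Λf m κ X₁ Y₁ φ * reg Λf m κ X₂ Y₂ φ
          = reg Λf m κ (X₁ ∪ X₂) (Y₁ ∪ Y₂) φ) ∧
    (∀ X X' Y : Finset (Pt d), X ⊆ X' → X' ⊆ Y → Y ⊆ Λf →
      ∀ φ : Fld d, reg Λf m κ X Y φ ≤ reg Λf m κ X' Y φ) := by
  classical
  have hIIint : ∀ (X Y : Finset (Pt d)) (φ : Fld d), X ⊆ Y → Y ⊆ Λf →
      Integrable (fun ψ : ↥Y → ℝ => Real.exp (qf Λf X m κ (paste Y φ ψ))) volume := by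
    intro X Y φ hXY hYΛ
    rw [← integrand_eq]
    exact hint X Y φ hXY hYΛ
  have hpos : ∀ (X Y : Finset (Pt d)) (φ : Fld d), X ⊆ Y → Y ⊆ Λf →
      0 < II Λf m κ X Y φ := fun X Y φ hXY hYΛ =>
    II_pos Λf X Y m κ φ (hIIint X Y φ hXY hYΛ)
  refine ⟨?_, ?_, ?_⟩
  · -- (i)
    intro X Y hXY hYΛ
    rw [reg]
    apply div_self
    rw [condExp_eq]
    exact ne_of_gt (div_pos (hpos X Y 0 hXY hYΛ)
      (hpos ∅ Y 0 (Finset.empty_subset Y) hYΛ))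
  · -- (ii)
    intro X₁ Y₁ X₂ Y₂ h₁ h₂ hY₁ hY₂ hdisj φ
    have hfac1 := factorize Λf m κ X₁ Y₁ X₂ Y₂ h₁ h₂ hdisj φ
    have hfac2 := factorize Λf m κ X₁ Y₁ X₂ Y₂ h₁ h₂ hdisj 0
    have hfac3 := factorize Λf m κ ∅ Y₁ ∅ Y₂ (Finset.empty_subset _)
      (Finset.empty_subset _) hdisj φ
    have hfac4 := factorize Λf m κ ∅ Y₁ ∅ Y₂ (Finset.empty_subset _)
      (Finset.empty_subset _) hdisj 0
    rw [Finset.empty_union] at hfac3 hfac4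
    have p1 := hpos X₁ Y₁ φ h₁ hY₁
    have p2 := hpos X₁ Y₁ 0 h₁ hY₁
    have p3 := hpos ∅ Y₁ φ (Finset.empty_subset _) hY₁
    have p4 := hpos ∅ Y₁ 0 (Finset.empty_subset _) hY₁
    have q1 := hpos X₂ Y₂ φ h₂ hY₂
    have q2 := hpos X₂ Y₂ 0 h₂ hY₂
    have q3 := hpos ∅ Y₂ φ (Finset.empty_subset _) hY₂
    have q4 := hpos ∅ Y₂ 0 (Finset.empty_subset _) hY₂
    have e1 := Real.exp_pos (energy Λf m φ)
    have e2 := Real.exp_pos (energy Λf m (0 : Fld d))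
    simp only [reg, condExp_eq]
    rw [hfac1, hfac2, hfac3, hfac4]
    field_simp
  · -- (iii)
    intro X X' Y hXX' hX'Y hYΛ φ
    have hXY : X ⊆ Y := hXX'.trans hX'Y
    obtain ⟨MX, hMXeq, hMXle, ψX, hMXval⟩ :=
      exists_shift Λf m κ X Y (hIIint X Y 0 hXY hYΛ) φ
    obtain ⟨MX', hMX'eq, hMX'le, hw'⟩ :=
      exists_shift Λf m κ X' Y (hIIint X' Y 0 hX'Y hYΛ) φ
    obtain ⟨M0, hM0eq, hM0le, hw0⟩ :=
      exists_shift Λf m κ ∅ Y (hIIint ∅ Y 0 (Finset.empty_subset _) hYΛ) φ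
    have hM : MX ≤ MX' := by
      rw [hMXval]
      calc qf Λf X m κ (paste Y φ ψX) ≤ qf Λf X' m κ (paste Y φ ψX) :=
            qf_mono Λf m hκ hXX' _
        _ ≤ MX' := hMX'le ψX
    have pX := hpos X Y 0 hXY hYΛ
    have pX' := hpos X' Y 0 hX'Y hYΛ
    have p0 := hpos ∅ Y 0 (Finset.empty_subset _) hYΛ
    have hsimp : ∀ A B MM : ℝ, 0 < A → 0 < B →
        (Real.exp MM * A / (Real.exp M0 * B)) / (A / B) = Real.exp MM / Real.exp M0 := by
      intro A B MM hA hB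
      field_simp
    simp only [reg, condExp_eq]
    rw [hMXeq, hMX'eq, hM0eq, hsimp _ _ MX pX p0, hsimp _ _ MX' pX' p0]
    exact (div_le_div_iff_of_pos_right (Real.exp_pos M0)).mpr (Real.exp_le_exp.mpr hM)
end
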